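/- Suppose (u_{i-1} + c·u_i + u_{i+1})/(c+2) ≤ M with c ≥ 2 and u_i > M. Then (M - u_{i-1})_+ + (M - u_{i+1})_+ > 0 and (u_i - M)_+ / ((M - u_{i-1})_+ + (M - u_{i+1})_+) ≤ 1/c, where (a)_+ = max{a, 0}. -/
import Mathlib

theorem stmt_2 (c M u1 u2 u3 : ℝ) (hc : 2 ≤ c)
    (h : (u1 + c * u2 + u3) / (c + 2) ≤ M) (hu2 : M < u2) :
    0 < max (M - u1) 0 + max (M - u3) 0 ∧
    max (u2 - M) 0 / (max (M - u1) 0 + max (M - u3) 0) ≤ 1 / c := by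
  have hc0 : (0:ℝ) < c := by linarith
  have hden : (0:ℝ) < c + 2 := by linarith
  have h' : u1 + c * u2 + u3 ≤ (c + 2) * M := by
    rw [div_le_iff₀ hden] at h; linarith
  have hkey : c * (u2 - M) ≤ max (M - u1) 0 + max (M - u3) 0 := by
    nlinarith [le_max_left (M - u1) 0, le_max_left (M - u3) 0]
  have hpos : 0 < max (M - u1) 0 + max (M - u3) 0 := by
    have : 0 < c * (u2 - M) := mul_pos hc0 (by linarith)
    linarith
  refine ⟨hpos, ?_⟩
  rw [max_eq_left (by linarith : (0:ℝ) ≤ u2 - M), div_le_div_iff₀ hpos hc0]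
  nlinarith
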